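/- Craig's representation of the Q-function: for all x ≥ 0, Q(x) = (1/π)·∫_0^{π/2} exp(−x²/(2 sin²θ)) dθ. -/

import Mathlib

open Real Set intervalIntegral
open MeasureTheory Filter

lemma hasDerivAt_negexp (r : ℝ) :
    HasDerivAt (fun r : ℝ => -Real.exp (-r ^ 2 / 2)) (r * Real.exp (-r ^ 2 / 2)) r := by
  have h1 : HasDerivAt (fun r : ℝ => -r ^ 2 / 2) (-r) r := by
    have := ((hasDerivAt_pow 2 r).neg.div_const 2)
    exact this.congr_deriv (by ring)
  have h3 := h1.exp.neg
  exact h3.congr_deriv (by ring)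

lemma tendsto_negexp : Tendsto (fun r : ℝ => -Real.exp (-r ^ 2 / 2)) atTop (nhds 0) := by
  have h1 : Tendsto (fun r : ℝ => -r ^ 2 / 2) atTop atBot := by
    apply Filter.Tendsto.atBot_div_const (by norm_num : (0:ℝ) < 2)
    exact tendsto_neg_atBot_iff.mpr (tendsto_pow_atTop two_ne_zero)
  have := (Real.tendsto_exp_atBot.comp h1).neg
  simpa using this

lemma integral_r_negexp {a : ℝ} (ha : 0 ≤ a) :
    ∫ r in Ioi a, r * Real.exp (-r ^ 2 / 2) = Real.exp (-a ^ 2 / 2) := by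
  have := integral_Ioi_of_hasDerivAt_of_nonneg'
    (g := fun r : ℝ => -Real.exp (-r ^ 2 / 2))
    (g' := fun r : ℝ => r * Real.exp (-r ^ 2 / 2)) (a := a) (l := 0)
    (fun r _ => hasDerivAt_negexp r)
    (fun r hr => mul_nonneg (le_of_lt (lt_of_le_of_lt ha hr)) (Real.exp_pos _).le)
    tendsto_negexp
  simpa using this

lemma integrableOn_r_negexp :
    IntegrableOn (fun r : ℝ => r * Real.exp (-r ^ 2 / 2)) (Ioi 0) := by
  exact integrableOn_Ioi_deriv_of_nonneg'
    (g := fun r : ℝ => -Real.exp (-r ^ 2 / 2))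
    (fun r _ => hasDerivAt_negexp r)
    (fun r hr => mul_nonneg (le_of_lt hr) (Real.exp_pos _).le)
    tendsto_negexp

lemma integral_exp_Ioi_zero :
    ∫ t in Ioi (0:ℝ), Real.exp (-t ^ 2 / 2) = Real.sqrt (2 * Real.pi) / 2 := by
  have := integral_gaussian_Ioi (1/2)
  rw [show Real.pi / (1/2) = 2 * Real.pi by ring] at this
  rw [← this]
  apply setIntegral_congr_fun measurableSet_Ioi
  intro t _
  norm_num
  ring_nf

/-- The Gaussian tail function `Q(x) = (1/√(2π)) ∫_x^∞ e^{-t²/2} dt`. -/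
noncomputable def gaussQ (x : ℝ) : ℝ :=
  (Real.sqrt (2 * Real.pi))⁻¹ * ∫ t in Set.Ioi x, Real.exp (-t ^ 2 / 2)

/-- Craig's representation of the Q-function. -/
theorem gaussQ_craig (x : ℝ) (hx : 0 ≤ x) :
    gaussQ x = (1 / Real.pi) *
      ∫ θ in (0 : ℝ)..(Real.pi / 2), Real.exp (-x ^ 2 / (2 * Real.sin θ ^ 2)) := by
  have hπ := Real.pi_pos
  have h2pi : (0:ℝ) < 2 * Real.pi := by positivity
  set f : ℝ × ℝ → ℝ :=
    (Ioi x ×ˢ Ioi (0:ℝ)).indicator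
      (fun p => Real.exp (-p.1 ^ 2 / 2) * Real.exp (-p.2 ^ 2 / 2)) with hfdef
  have hmeas_set : MeasurableSet (Ioi x ×ˢ Ioi (0:ℝ)) :=
    measurableSet_Ioi.prod measurableSet_Ioi
  have hf_meas : Measurable f := by
    apply Measurable.indicator _ hmeas_set
    fun_prop
  have key := integral_comp_polarCoord_symm f
  -- the right-hand side
  have hRHS : (∫ p : ℝ × ℝ, f p) = Real.pi * gaussQ x := by
    rw [hfdef, MeasureTheory.integral_indicator hmeas_set, Measure.volume_eq_prod,
      setIntegral_prod_mul (fun u : ℝ => Real.exp (-u ^ 2 / 2))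
        (fun v : ℝ => Real.exp (-v ^ 2 / 2))]
    rw [integral_exp_Ioi_zero, gaussQ]
    have h1 : Real.sqrt (2 * Real.pi) ≠ 0 := by positivity
    have h2 : Real.sqrt (2 * Real.pi) * Real.sqrt (2 * Real.pi) = 2 * Real.pi :=
      Real.mul_self_sqrt h2pi.le
    apply mul_left_cancel₀ h1
    have hinv : Real.sqrt (2 * Real.pi) * (Real.sqrt (2 * Real.pi))⁻¹ = 1 := mul_inv_cancel₀ h1
    linear_combination ((∫ t in Set.Ioi x, Real.exp (-t ^ 2 / 2)) / 2) * h2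
      - (Real.pi * (∫ t in Set.Ioi x, Real.exp (-t ^ 2 / 2))) * hinv
  -- the left-hand side
  set F : ℝ × ℝ → ℝ :=
    (Ioi (0:ℝ) ×ˢ Ioo (-Real.pi) Real.pi).indicator
      (fun p => p.1 * f (p.1 * Real.cos p.2, p.1 * Real.sin p.2)) with hFdef
  have hmeas2 : MeasurableSet (Ioi (0:ℝ) ×ˢ Ioo (-Real.pi) Real.pi) :=
    measurableSet_Ioi.prod measurableSet_Ioo
  have hmap : Measurable (fun p : ℝ × ℝ => (p.1 * Real.cos p.2, p.1 * Real.sin p.2)) := by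
    fun_prop
  have hF_meas : Measurable F :=
    (measurable_fst.mul (hf_meas.comp hmap)).indicator hmeas2
  have step1 : (∫ p in polarCoord.target, p.1 • f (polarCoord.symm p)) = ∫ p : ℝ × ℝ, F p := by
    rw [hFdef, MeasureTheory.integral_indicator hmeas2,
      show polarCoord.target = Ioi (0:ℝ) ×ˢ Ioo (-Real.pi) Real.pi from rfl]
    apply setIntegral_congr_fun hmeas2
    intro p _
    simp [polarCoord_symm_apply, smul_eq_mul]
  -- integrability of F
  have hb1 : Integrable ((Ioi (0:ℝ)).indicator (fun r => r * Real.exp (-r ^ 2 / 2))) :=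
    (integrable_indicator_iff measurableSet_Ioi).2 integrableOn_r_negexp
  have hb2 : Integrable ((Ioo (-Real.pi) Real.pi).indicator (fun _ : ℝ => (1:ℝ))) :=
    (integrable_indicator_iff measurableSet_Ioo).2
      (integrableOn_const measure_Ioo_lt_top.ne)
  have hbound := hb1.mul_prod hb2
  have hFint : Integrable F (volume.prod volume) := by
    apply hbound.mono' hF_meas.aestronglyMeasurable
    filter_upwards with p
    by_cases hp : p ∈ Ioi (0:ℝ) ×ˢ Ioo (-Real.pi) Real.pi
    · rw [hFdef, Set.indicator_of_mem hp, Set.indicator_of_mem hp.1, Set.indicator_of_mem hp.2]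
      have hr0 : 0 < p.1 := hp.1
      have hfle : f (p.1 * Real.cos p.2, p.1 * Real.sin p.2) ≤ Real.exp (-p.1 ^ 2 / 2) := by
        rw [hfdef]
        by_cases hm : ((p.1 * Real.cos p.2, p.1 * Real.sin p.2) : ℝ × ℝ) ∈ Ioi x ×ˢ Ioi (0:ℝ)
        · rw [Set.indicator_of_mem hm, ← Real.exp_add]
          apply le_of_eq
          congr 1
          linear_combination (-(p.1 ^ 2) / 2) * Real.sin_sq_add_cos_sq p.2
        · rw [Set.indicator_of_notMem hm]
          exact (Real.exp_pos _).le
      have hfnn : 0 ≤ f (p.1 * Real.cos p.2, p.1 * Real.sin p.2) := by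
        rw [hfdef]
        apply Set.indicator_nonneg
        intro y _
        positivity
      rw [Real.norm_eq_abs, abs_of_nonneg (mul_nonneg hr0.le hfnn), mul_one]
      exact mul_le_mul_of_nonneg_left hfle hr0.le
    · rw [hFdef, Set.indicator_of_notMem hp, norm_zero]
      apply mul_nonneg
      · apply Set.indicator_nonneg
        intro r hr
        exact mul_nonneg (le_of_lt hr) (Real.exp_pos _).le
      · apply Set.indicator_nonneg
        intro _ _
        norm_num
  have step2 : (∫ p : ℝ × ℝ, F p) = ∫ θ : ℝ, ∫ r : ℝ, F (r, θ) := by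
    rw [Measure.volume_eq_prod]
    exact integral_prod_symm F hFint
  -- computing the inner integral
  have step3 : ∀ θ : ℝ, (∫ r : ℝ, F (r, θ)) =
      (Ioo (0:ℝ) (Real.pi/2)).indicator
        (fun θ => Real.exp (-x ^ 2 / (2 * Real.cos θ ^ 2))) θ := by
    intro θ
    by_cases hθ : θ ∈ Ioo (0:ℝ) (Real.pi/2)
    · obtain ⟨hθ1, hθ2⟩ := hθ
      have hc : 0 < Real.cos θ := Real.cos_pos_of_mem_Ioo ⟨by linarith, by linarith⟩
      have hs : 0 < Real.sin θ := Real.sin_pos_of_pos_of_lt_pi hθ1 (by linarith)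
      have hθa : -Real.pi < θ := by linarith
      have hθb : θ < Real.pi := by linarith
      have hfr : ∀ r : ℝ, F (r, θ) =
          (Ioi (x / Real.cos θ)).indicator (fun r => r * Real.exp (-r ^ 2 / 2)) r := by
        intro r
        by_cases hr : r ∈ Ioi (x / Real.cos θ)
        · have hr0 : 0 < r := lt_of_le_of_lt (div_nonneg hx hc.le) hr
          have hmem1 : ((r, θ) : ℝ × ℝ) ∈ Ioi (0:ℝ) ×ˢ Ioo (-Real.pi) Real.pi :=
            Set.mem_prod.2 ⟨hr0, ⟨hθa, hθb⟩⟩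
          have hmem2 : ((r * Real.cos θ, r * Real.sin θ) : ℝ × ℝ) ∈ Ioi x ×ˢ Ioi (0:ℝ) :=
            Set.mem_prod.2 ⟨(div_lt_iff₀ hc).1 hr, mul_pos hr0 hs⟩
          rw [Set.indicator_of_mem hr, hFdef, Set.indicator_of_mem hmem1, hfdef]
          dsimp only
          rw [Set.indicator_of_mem hmem2]
          dsimp only
          rw [← Real.exp_add]
          have harg : -(r * Real.cos θ) ^ 2 / 2 + -(r * Real.sin θ) ^ 2 / 2 = -r ^ 2 / 2 := by
            linear_combination (-(r ^ 2) / 2) * Real.sin_sq_add_cos_sq θ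
          rw [harg]
        · rw [Set.indicator_of_notMem hr]
          by_cases hr0 : 0 < r
          · have hnot : ((r * Real.cos θ, r * Real.sin θ) : ℝ × ℝ) ∉ Ioi x ×ˢ Ioi (0:ℝ) :=
              fun hm => hr (mem_Ioi.2 ((div_lt_iff₀ hc).2 hm.1))
            have hmem1 : ((r, θ) : ℝ × ℝ) ∈ Ioi (0:ℝ) ×ˢ Ioo (-Real.pi) Real.pi :=
              Set.mem_prod.2 ⟨hr0, ⟨hθa, hθb⟩⟩
            rw [hFdef, Set.indicator_of_mem hmem1, hfdef]
            dsimp only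
            rw [Set.indicator_of_notMem hnot, mul_zero]
          · rw [hFdef, Set.indicator_of_notMem]
            intro hm
            exact hr0 hm.1
      have hθmem : θ ∈ Ioo (0:ℝ) (Real.pi/2) := Set.mem_Ioo.2 ⟨hθ1, hθ2⟩
      rw [Set.indicator_of_mem hθmem]
      calc (∫ r : ℝ, F (r, θ))
          = ∫ r : ℝ, (Ioi (x / Real.cos θ)).indicator
              (fun r => r * Real.exp (-r ^ 2 / 2)) r := by
            exact integral_congr_ae (Filter.Eventually.of_forall hfr)
        _ = ∫ r in Ioi (x / Real.cos θ), r * Real.exp (-r ^ 2 / 2) :=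
            integral_indicator measurableSet_Ioi
        _ = Real.exp (-(x / Real.cos θ) ^ 2 / 2) := integral_r_negexp (div_nonneg hx hc.le)
        _ = Real.exp (-x ^ 2 / (2 * Real.cos θ ^ 2)) := by
            congr 1
            field_simp
    · rw [Set.indicator_of_notMem hθ]
      have hz : ∀ r : ℝ, F (r, θ) = 0 := by
        intro r
        by_cases hp : ((r, θ) : ℝ × ℝ) ∈ Ioi (0:ℝ) ×ˢ Ioo (-Real.pi) Real.pi
        · rw [hFdef, Set.indicator_of_mem hp, hfdef, Set.indicator_of_notMem, mul_zero]
          intro hm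
          have hr0 : 0 < r := hp.1
          have hm1 : x < r * Real.cos θ := hm.1
          have hm2 : 0 < r * Real.sin θ := hm.2
          have hθa : -Real.pi < θ := hp.2.1
          have hθb : θ < Real.pi := hp.2.2
          have hs : 0 < Real.sin θ := by
            by_contra h
            push_neg at h
            nlinarith [hm2]
          have hcθ : 0 < Real.cos θ := by
            by_contra h
            push_neg at h
            nlinarith [hm1]
          have hθ1 : 0 < θ := by
            by_contra h
            push_neg at h
            exact absurd (Real.sin_nonpos_of_nonpos_of_neg_pi_le h hθa.le) (not_le.2 hs)
          have hθ2 : θ < Real.pi / 2 := by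
            by_contra h
            push_neg at h
            exact absurd (Real.cos_nonpos_of_pi_div_two_le_of_le h (by linarith)) (not_le.2 hcθ)
          exact hθ ⟨hθ1, hθ2⟩
        · rw [hFdef, Set.indicator_of_notMem hp]
      simp only [hz]
      simp
  -- assembling everything
  have step4 : (∫ θ : ℝ, (Ioo (0:ℝ) (Real.pi/2)).indicator
        (fun θ => Real.exp (-x ^ 2 / (2 * Real.cos θ ^ 2))) θ)
      = ∫ θ in (0:ℝ)..(Real.pi/2), Real.exp (-x ^ 2 / (2 * Real.cos θ ^ 2)) := by
    rw [MeasureTheory.integral_indicator measurableSet_Ioo,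
      intervalIntegral.integral_of_le (by positivity), integral_Ioc_eq_integral_Ioo]
  have step5 : (∫ θ in (0:ℝ)..(Real.pi/2), Real.exp (-x ^ 2 / (2 * Real.cos θ ^ 2)))
      = ∫ θ in (0:ℝ)..(Real.pi/2), Real.exp (-x ^ 2 / (2 * Real.sin θ ^ 2)) := by
    have h := intervalIntegral.integral_comp_sub_left (a := (0:ℝ)) (b := Real.pi/2)
      (fun θ => Real.exp (-x ^ 2 / (2 * Real.sin θ ^ 2))) (Real.pi/2)
    simp only [sub_zero, sub_self, Real.sin_pi_div_two_sub] at h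
    exact h
  have main : Real.pi * gaussQ x
      = ∫ θ in (0:ℝ)..(Real.pi/2), Real.exp (-x ^ 2 / (2 * Real.sin θ ^ 2)) := by
    rw [← hRHS, ← key, step1, step2,
      integral_congr_ae (Filter.Eventually.of_forall step3), step4, step5]
  rw [← main]
  field_simp
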